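/- Let X be a real Banach space, 1 ≤ p < ∞, and A : X ⇉ X* a monotone operator with nonempty graph. Suppose that for every z ∉ cl(conv(dom A)) and all sufficiently large λ > 0, the pair (z,0) is not monotonically related to the graph of A + λ J_p(· − z). Then cl(conv(dom A)) = cl(P_X[dom F_A]). -/

import Mathlib

open Set

noncomputable section

variable {X : Type*}

/-- The domain of a set-valued operator `A : X ⇉ X*`, identified with its graph. -/
def opDom [NormedAddCommGroup X] [NormedSpace ℝ X]
    (A : Set (X × (X →L[ℝ] ℝ))) : Set X := Prod.fst '' A

/-- The range of a set-valued operator. -/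
def opRan [NormedAddCommGroup X] [NormedSpace ℝ X]
    (A : Set (X × (X →L[ℝ] ℝ))) : Set (X →L[ℝ] ℝ) := Prod.snd '' A

/-- `(x, x*)` is monotonically related to the set `S ⊆ X × X*`:
`⟨x − y, x* − y*⟩ ≥ 0` for all `(y, y*) ∈ S`. -/
def MonRel [NormedAddCommGroup X] [NormedSpace ℝ X]
    (p : X × (X →L[ℝ] ℝ)) (S : Set (X × (X →L[ℝ] ℝ))) : Prop :=
  ∀ q ∈ S, 0 ≤ (p.2 - q.2) (p.1 - q.1)

/-- `A` is a monotone operator (identified with its graph). -/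
def IsMonotoneOp [NormedAddCommGroup X] [NormedSpace ℝ X]
    (A : Set (X × (X →L[ℝ] ℝ))) : Prop :=
  ∀ p ∈ A, MonRel p A

/-- `A` is maximally monotone: it is monotone and every monotonically related
pair already belongs to the graph. -/
def IsMaxMonotoneOp [NormedAddCommGroup X] [NormedSpace ℝ X]
    (A : Set (X × (X →L[ℝ] ℝ))) : Prop :=
  IsMonotoneOp A ∧ ∀ p : X × (X →L[ℝ] ℝ), MonRel p A → p ∈ A

/-- The Fitzpatrick function of `A`, with values in `(-∞, +∞]` (modeled in `EReal`):
`F_A(x, x*) = sup_{(a,a*) ∈ A} (⟨a, x*⟩ + ⟨x, a*⟩ − ⟨a, a*⟩)`. -/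
def fitz [NormedAddCommGroup X] [NormedSpace ℝ X]
    (A : Set (X × (X →L[ℝ] ℝ))) (x : X) (x' : X →L[ℝ] ℝ) : EReal :=
  ⨆ a ∈ A, ((x' a.1 + a.2 x - a.2 a.1 : ℝ) : EReal)

/-- The domain of the Fitzpatrick function: the set of pairs where `F_A < +∞`. -/
def fitzDom [NormedAddCommGroup X] [NormedSpace ℝ X]
    (A : Set (X × (X →L[ℝ] ℝ))) : Set (X × (X →L[ℝ] ℝ)) :=
  {q | fitz A q.1 q.2 < ⊤}

/-- `J_p(x) = (1/p) ∂‖·‖^p (x)`, the subdifferential at `x` of `y ↦ ‖y‖^p / p`. -/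
def Jmap [NormedAddCommGroup X] [NormedSpace ℝ X]
    (p : ℝ) (x : X) : Set (X →L[ℝ] ℝ) :=
  {x' | ∀ y : X, x' (y - x) + ‖x‖ ^ p / p ≤ ‖y‖ ^ p / p}

/-- The graph of the operator `A + λ J_p(· − z)`. -/
def sumGraph [NormedAddCommGroup X] [NormedSpace ℝ X]
    (A : Set (X × (X →L[ℝ] ℝ))) (lam p : ℝ) (z : X) :
    Set (X × (X →L[ℝ] ℝ)) :=
  {q | ∃ a' b' : X →L[ℝ] ℝ, (q.1, a') ∈ A ∧ b' ∈ Jmap p (q.1 - z) ∧ q.2 = a' + lam • b'}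


section auxLemmas

variable [NormedAddCommGroup X] [NormedSpace ℝ X]

lemma term_le_fitz {A : Set (X × (X →L[ℝ] ℝ))} {a : X × (X →L[ℝ] ℝ)} (ha : a ∈ A)
    (x : X) (x' : X →L[ℝ] ℝ) :
    ((x' a.1 + a.2 x - a.2 a.1 : ℝ) : EReal) ≤ fitz A x x' :=
  le_iSup₂ (f := fun a (_ : a ∈ A) => ((x' a.1 + a.2 x - a.2 a.1 : ℝ) : EReal)) a ha

lemma exists_fitz_bound {A : Set (X × (X →L[ℝ] ℝ))} (hne : A.Nonempty)
    {x : X} {x' : X →L[ℝ] ℝ} (hx : fitz A x x' < ⊤) :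
    ∃ M : ℝ, ∀ a ∈ A, x' a.1 + a.2 x - a.2 a.1 ≤ M := by
  obtain ⟨a0, ha0⟩ := hne
  have hbot : fitz A x x' ≠ ⊥ := fun hb => by
    have h0 := term_le_fitz ha0 x x'
    rw [hb, le_bot_iff] at h0
    exact EReal.coe_ne_bot _ h0
  refine ⟨(fitz A x x').toReal, fun a ha => ?_⟩
  have h1 := term_le_fitz ha x x'
  rw [← EReal.coe_toReal hx.ne hbot] at h1
  exact EReal.coe_le_coe_iff.mp h1

lemma fitz_lt_top_of_bound {A : Set (X × (X →L[ℝ] ℝ))} {x : X} {x' : X →L[ℝ] ℝ}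
    {M : ℝ} (h : ∀ a ∈ A, x' a.1 + a.2 x - a.2 a.1 ≤ M) : fitz A x x' < ⊤ := by
  have : fitz A x x' ≤ (M : EReal) :=
    iSup₂_le fun a ha => EReal.coe_le_coe_iff.mpr (h a ha)
  exact lt_of_le_of_lt this (EReal.coe_lt_top M)

lemma convex_proj_fitzDom {A : Set (X × (X →L[ℝ] ℝ))} (hne : A.Nonempty) :
    Convex ℝ (Prod.fst '' fitzDom A) := by
  rintro x1 ⟨q1, hq1, rfl⟩ x2 ⟨q2, hq2, rfl⟩ t s ht hs hts
  obtain ⟨M1, hM1⟩ := exists_fitz_bound hne hq1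
  obtain ⟨M2, hM2⟩ := exists_fitz_bound hne hq2
  refine ⟨t • q1 + s • q2, ?_, rfl⟩
  refine fitz_lt_top_of_bound (M := t * M1 + s * M2) (fun a ha => ?_)
  have e1 := hM1 a ha
  have e2 := hM2 a ha
  have key : (t • q1 + s • q2).2 a.1 + a.2 (t • q1 + s • q2).1 - a.2 a.1
      = t * (q1.2 a.1 + a.2 q1.1 - a.2 a.1) + s * (q2.2 a.1 + a.2 q2.1 - a.2 a.1) := by
    simp only [Prod.fst_add, Prod.snd_add, Prod.smul_fst, Prod.smul_snd,
      ContinuousLinearMap.add_apply, ContinuousLinearMap.coe_smul',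
      Pi.smul_apply, smul_eq_mul, map_add, map_smul]
    linear_combination (a.2 a.1) * hts
  rw [key]
  have := mul_le_mul_of_nonneg_left e1 ht
  have := mul_le_mul_of_nonneg_left e2 hs
  linarith

end auxLemmas

/-- Theorem: if `A` is monotone with nonempty graph and for every
`z ∉ cl(conv(dom A))` and all sufficiently large `λ > 0` the pair `(z, 0)` is not
monotonically related to `gra (A + λ J_p(· − z))`, then
`cl(conv(dom A)) = cl(P_X[dom F_A])`. -/
theorem closure_convexHull_eq_proj_of_not_monRel
    [NormedAddCommGroup X] [NormedSpace ℝ X] [CompleteSpace X]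
    (p : ℝ) (hp : 1 ≤ p)
    (A : Set (X × (X →L[ℝ] ℝ))) (hne : A.Nonempty) (hmono : IsMonotoneOp A)
    (h : ∀ z ∉ closure (convexHull ℝ (opDom A)), ∃ Λ : ℝ, 0 < Λ ∧ ∀ lam : ℝ, Λ ≤ lam →
      ¬ MonRel (z, (0 : X →L[ℝ] ℝ)) (sumGraph A lam p z)) :
    closure (convexHull ℝ (opDom A)) = closure (Prod.fst '' fitzDom A) := by
  -- easy inclusion: dom A ⊆ P(dom F_A)
  have hsub : opDom A ⊆ Prod.fst '' fitzDom A := by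
    rintro x ⟨q, hq, rfl⟩
    refine ⟨q, ?_, rfl⟩
    refine fitz_lt_top_of_bound (M := q.2 q.1) (fun a ha => ?_)
    have := hmono q hq a ha
    simp only [ContinuousLinearMap.sub_apply, map_sub] at this
    linarith
  apply subset_antisymm
  · exact closure_mono (convexHull_min hsub (convex_proj_fitzDom hne))
  · refine closure_minimal (fun z0 hz0 => ?_) isClosed_closure
    by_contra hz
    obtain ⟨q, hq, rfl⟩ := hz0
    set z := q.1 with hzdef
    obtain ⟨Λ, hΛ, hmr⟩ := h z hz
    -- a ball around z avoiding the closed convex hull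
    obtain ⟨ε, hε, hball⟩ := Metric.isOpen_iff.mp isClosed_closure.isOpen_compl z hz
    have hdist : ∀ x ∈ opDom A, ε ≤ ‖x - z‖ := by
      intro x hx
      by_contra hlt
      push_neg at hlt
      have hxball : x ∈ Metric.ball z ε := by
        rw [Metric.mem_ball, dist_eq_norm]; exact hlt
      exact hball hxball (subset_closure (subset_convexHull ℝ _ hx))
    obtain ⟨M, hM⟩ := exists_fitz_bound hne hq
    have hp0 : (0:ℝ) < p := lt_of_lt_of_le one_pos hp
    set C : ℝ := |M| + |q.2 z| + 1 with hC
    have hC0 : 0 < C := by positivity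
    set E : ℝ := ε ^ (p - 1) with hE
    have hE0 : 0 < E := Real.rpow_pos_of_pos hε _
    set lam : ℝ := max Λ (p * (‖q.2‖ + C / ε) / E) with hlamdef
    have hlam0 : 0 < lam := lt_of_lt_of_le hΛ (le_max_left _ _)
    obtain ⟨w, hw, hwlt⟩ := not_forall₂.mp (hmr lam (le_max_left _ _))
    push_neg at hwlt
    obtain ⟨a', b', haA, hb, hw2⟩ := hw
    set x := w.1 with hxdef
    set r : ℝ := ‖x - z‖ with hrdef
    have hr : ε ≤ r := hdist x ⟨(x, a'), haA, rfl⟩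
    have hr0 : 0 < r := lt_of_lt_of_le hε hr
    -- subdifferential estimate at y = 0
    have hJ : b' (z - x) ≤ -(r ^ p / p) := by
      have h0 := hb 0
      have e0 : (0:X) - (x - z) = z - x := by abel
      rw [e0, norm_zero, Real.zero_rpow (ne_of_gt hp0), zero_div] at h0
      linarith
    -- consequence of non-monotone-relatedness
    have hwlt' : 0 < a' (z - x) + lam * b' (z - x) := by
      have e : ((z, (0:X →L[ℝ] ℝ)).2 - w.2) ((z, (0:X →L[ℝ] ℝ)).1 - w.1)
          = -(a' (z - x) + lam * b' (z - x)) := by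
        simp only [hw2, zero_sub, ContinuousLinearMap.neg_apply,
          ContinuousLinearMap.add_apply, ContinuousLinearMap.coe_smul',
          Pi.smul_apply, smul_eq_mul]
        rfl
      rw [e] at hwlt
      linarith
    have hK : lam * (r ^ p / p) < a' (z - x) := by
      have := mul_le_mul_of_nonneg_left hJ hlam0.le
      nlinarith
    -- Fitzpatrick bound at (x, a')
    have hMa : q.2 x + a' (z - x) ≤ M := by
      have h1 := hM (x, a') haA
      rw [← hzdef] at h1
      simp only [map_sub]
      linarith
    -- Cauchy-Schwarz type bound
    have hq2 : q.2 z - q.2 x ≤ ‖q.2‖ * r := by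
      have h1 : q.2 (z - x) ≤ ‖q.2‖ * ‖z - x‖ :=
        le_trans (Real.le_norm_self _) ((q.2).le_opNorm _)
      rw [map_sub, norm_sub_rev] at h1
      exact h1
    -- rpow estimates
    have hrp : E * r ≤ r ^ p := by
      have h1 : E ≤ r ^ (p - 1) := Real.rpow_le_rpow hε.le hr (by linarith)
      have h2 : r ^ (p - 1) * r = r ^ p := by
        rw [← Real.rpow_add_one hr0.ne']
        norm_num
      nlinarith
    have hB' : p * ‖q.2‖ + p * (C / ε) ≤ lam * E := by
      have hlam2 : p * (‖q.2‖ + C / ε) / E ≤ lam := le_max_right _ _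
      rw [div_le_iff₀ hE0] at hlam2
      linarith
    have h7 : C ≤ C * (r / ε) := by
      rw [le_mul_iff_one_le_right hC0, le_div_iff₀ hε]
      linarith
    have step1 : p * ‖q.2‖ * r + p * (C / ε) * r ≤ lam * E * r := by
      have h8 := mul_le_mul_of_nonneg_right hB' hr0.le
      rw [add_mul] at h8
      linarith
    have step2 : lam * E * r ≤ lam * r ^ p := by
      rw [mul_assoc]
      exact mul_le_mul_of_nonneg_left hrp hlam0.le
    have step3 : p * C ≤ p * (C / ε) * r := by
      have h10 := mul_le_mul_of_nonneg_left h7 hp0.le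
      have e10 : p * (C * (r / ε)) = p * (C / ε) * r := by ring
      linarith
    clear_value z C E lam x r
    have final : ‖q.2‖ * r + C ≤ lam * (r ^ p / p) := by
      have step4 : (‖q.2‖ * r + C) * p ≤ lam * r ^ p := by
        have e : (‖q.2‖ * r + C) * p = p * ‖q.2‖ * r + p * C := by ring
        rw [e]
        linarith
      have h9 : ‖q.2‖ * r + C ≤ lam * r ^ p / p := (le_div_iff₀ hp0).mpr step4
      rw [mul_div_assoc] at h9
      exact h9
    linarith [hMa, hK, final, hq2, le_abs_self M, neg_abs_le (q.2 z)]
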